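/- For every integer k ≥ 2 and sufficiently small ε > 0, consider the matching instance with n = 2k agents and items where for i ≤ k agent i values item i at k/(k+1), item i+k at 1/(k+1), and other items at 0, and for i > k agent i values items 1,...,k at 1/(2k)+ε each and items k+1,...,2k at 1/(2k)−ε each. Then the optimal utilitarian social welfare is at least k²/(k+1) + 1/2 − kε, while every iEF lottery has expected utilitarian welfare at most k/(k+1) + 1/2 + kε; hence the price of iEF with respect to utilitarian welfare is Ω(n). -/

import Mathlib

open Finset

/-- Probability that agent `i` receives item `j` under a lottery `x` over matchings. -/
def prMatch {n : ℕ} (x : Equiv.Perm (Fin n) → ℝ) (i j : Fin n) : ℝ :=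
  ∑ b ∈ Finset.univ.filter (fun b : Equiv.Perm (Fin n) => b i = j), x b

/-- Interim envy-freeness of a lottery over matchings: for all agents `i ≠ k` and every
item `j` received by `i` with positive probability, `v_i(j) ≥ E[v_i(b(k)) | b(i) = j]`
(stated multiplied through by the positive probability `Pr[b(i) = j]`). -/
def MIEF {n : ℕ} (v : Fin n → Fin n → ℝ) (x : Equiv.Perm (Fin n) → ℝ) : Prop :=
  ∀ i k : Fin n, i ≠ k → ∀ j : Fin n, 0 < prMatch x i j →
    (∑ b ∈ Finset.univ.filter (fun b : Equiv.Perm (Fin n) => b i = j), x b * v i (b k))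
      ≤ v i j * prMatch x i j
/-- Valuations of the hard instance with `2k` agents and items: for `i < k` (agents
1..k), agent `i` values item `i` at `k/(k+1)`, item `i+k` at `1/(k+1)`, and the rest at
0; for `i ≥ k` (agents k+1..2k), agent `i` values the first `k` items at `1/(2k)+ε` and
the last `k` items at `1/(2k)-ε`. -/
noncomputable def v12 (k : ℕ) (ε : ℝ) : Fin (2*k) → Fin (2*k) → ℝ := fun i j =>
  if (i : ℕ) < k then
    (if (j : ℕ) = (i : ℕ) then (k : ℝ) / ((k : ℝ) + 1)
     else if (j : ℕ) = (i : ℕ) + k then 1 / ((k : ℝ) + 1)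
     else 0)
  else
    (if (j : ℕ) < k then 1 / (2 * (k : ℝ)) + ε else 1 / (2 * (k : ℝ)) - ε)

/-- Splitting a sum over `Fin (2*k)` according to whether the index is `< k`. -/
lemma sum_fin_two_mul_split {M : Type*} [AddCommMonoid M] (k : ℕ) (f g : ℕ → M) :
    ∑ i : Fin (2*k), (if (i:ℕ) < k then f i else g i)
      = (∑ j ∈ Finset.range k, f j) + ∑ j ∈ Finset.Ico k (2*k), g j := by
  rw [Fin.sum_univ_eq_sum_range (fun j => if j < k then f j else g j), Finset.range_eq_Ico,
    ← Finset.sum_Ico_consecutive _ (Nat.zero_le k) (by omega : k ≤ 2*k)]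
  congr 1
  · rw [Finset.range_eq_Ico]
    exact Finset.sum_congr rfl (fun j hj => by
      simp only [Finset.mem_Ico] at hj; rw [if_pos hj.2])
  · exact Finset.sum_congr rfl (fun j hj => by
      simp only [Finset.mem_Ico] at hj; rw [if_neg (by omega)])

/-- Constant version of the split. -/
lemma sum_fin_two_mul_const (k : ℕ) (c1 c2 : ℝ) :
    ∑ i : Fin (2*k), (if (i:ℕ) < k then c1 else c2) = k * c1 + k * c2 := by
  rw [sum_fin_two_mul_split k (fun _ => c1) (fun _ => c2), Finset.sum_const,
    Finset.sum_const, Finset.card_range, Nat.card_Ico]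
  have : 2*k - k = k := by omega
  rw [this]
  simp [nsmul_eq_mul]

lemma card_filter_lt (k : ℕ) :
    (Finset.univ.filter (fun i : Fin (2*k) => (i:ℕ) < k)).card = k := by
  rw [Finset.card_filter]
  have := sum_fin_two_mul_split (M := ℕ) k (fun _ => 1) (fun _ => 0)
  simpa using this

lemma card_filter_ge (k : ℕ) :
    (Finset.univ.filter (fun i : Fin (2*k) => k ≤ (i:ℕ))).card = k := by
  have h := Finset.card_filter_add_card_filter_not
    (s := (Finset.univ : Finset (Fin (2*k)))) (p := fun i : Fin (2*k) => (i:ℕ) < k)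
  have h2 : (Finset.univ.filter (fun i : Fin (2*k) => ¬ ((i:ℕ) < k)))
      = Finset.univ.filter (fun i : Fin (2*k) => k ≤ (i:ℕ)) := by
    apply Finset.filter_congr; intro i _; simp [not_lt]
  rw [card_filter_lt, h2] at h
  have hcard : (Finset.univ : Finset (Fin (2*k))).card = 2*k := by simp
  omega

/-- Every matching in the support of an MIEF lottery gives each agent at least a
proportional share. -/
lemma mief_prop {n : ℕ} (v : Fin n → Fin n → ℝ) (x : Equiv.Perm (Fin n) → ℝ)
    (hx : ∀ b, 0 ≤ x b) (hm : MIEF v x) (b : Equiv.Perm (Fin n)) (hb : 0 < x b)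
    (i : Fin n) : ∑ j, v i j ≤ (n : ℝ) * v i (b i) := by
  have hn : 1 ≤ n := i.pos
  set j := b i with hj
  set S := Finset.univ.filter (fun b' : Equiv.Perm (Fin n) => b' i = j) with hS
  have hbmem : b ∈ S := by simp [hS, hj]
  have hPrS : prMatch x i j = ∑ b' ∈ S, x b' := rfl
  have hPr : 0 < prMatch x i j := by
    rw [hPrS]
    exact lt_of_lt_of_le hb (Finset.single_le_sum (fun c _ => hx c) hbmem)
  set T := ∑ j', v i j' with hT
  have hinner : ∀ b' ∈ S, ∑ m ∈ Finset.univ.erase i, v i (b' m) = T - v i j := by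
    intro b' hb'
    have hbi : b' i = j := (Finset.mem_filter.1 hb').2
    have h2 := Finset.sum_erase_add Finset.univ (fun m => v i (b' m)) (Finset.mem_univ i)
    have h3 : ∑ m, v i (b' m) = T := Equiv.sum_comp b' (v i)
    simp only [hbi] at h2
    linarith [h2, h3]
  have hswap : ∑ m ∈ Finset.univ.erase i, ∑ b' ∈ S, x b' * v i (b' m)
      = (T - v i j) * prMatch x i j := by
    rw [Finset.sum_comm, hPrS, Finset.mul_sum]
    refine Finset.sum_congr rfl (fun b' hb' => ?_)
    rw [← Finset.mul_sum, hinner b' hb']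
    ring
  have htot : ∑ m ∈ Finset.univ.erase i, ∑ b' ∈ S, x b' * v i (b' m)
      ≤ ((n:ℝ) - 1) * (v i j * prMatch x i j) := by
    have hle : ∀ m ∈ Finset.univ.erase i,
        (∑ b' ∈ S, x b' * v i (b' m)) ≤ v i j * prMatch x i j := by
      intro m hmem
      exact hm i m (Ne.symm (Finset.mem_erase.1 hmem).1) j hPr
    calc ∑ m ∈ Finset.univ.erase i, ∑ b' ∈ S, x b' * v i (b' m)
        ≤ ∑ _m ∈ Finset.univ.erase i, v i j * prMatch x i j := Finset.sum_le_sum hle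
      _ = ((n:ℝ) - 1) * (v i j * prMatch x i j) := by
          rw [Finset.sum_const, Finset.card_erase_of_mem (Finset.mem_univ i)]
          simp only [Finset.card_univ, Fintype.card_fin, nsmul_eq_mul]
          rw [Nat.cast_sub hn, Nat.cast_one]
  rw [hswap] at htot
  have hkey : T - v i j ≤ ((n:ℝ) - 1) * v i j := by
    have := le_of_mul_le_mul_right (by linarith [htot] :
      (T - v i j) * prMatch x i j ≤ (((n:ℝ) - 1) * v i j) * prMatch x i j) hPr
    exact this
  have : v i (b i) = v i j := by rw [hj]
  linarith [hkey]

/-- Row sums of the valuation matrix are all 1. -/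
lemma v12_row_sum (k : ℕ) (hk : 2 ≤ k) (ε : ℝ) (i : Fin (2*k)) :
    ∑ j, v12 k ε i j = 1 := by
  have hk0 : (0:ℝ) < k := by exact_mod_cast (by omega : 0 < k)
  by_cases hi : (i:ℕ) < k
  · set a : Fin (2*k) := ⟨(i:ℕ), by omega⟩ with ha
    set c : Fin (2*k) := ⟨(i:ℕ) + k, by omega⟩ with hc
    have hpt : ∀ j : Fin (2*k), v12 k ε i j =
        (if j = a then (k:ℝ)/((k:ℝ)+1) else 0) + (if j = c then 1/((k:ℝ)+1) else 0) := by
      intro j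
      simp only [v12, if_pos hi]
      have h1 : ((j:ℕ) = (i:ℕ)) ↔ j = a := by
        rw [Fin.ext_iff]
      have h2 : ((j:ℕ) = (i:ℕ) + k) ↔ j = c := by
        rw [Fin.ext_iff]
      by_cases e1 : (j:ℕ) = (i:ℕ)
      · have e2 : ¬ ((j:ℕ) = (i:ℕ) + k) := by omega
        rw [if_pos e1, if_pos (h1.1 e1), if_neg (fun h => e2 (h2.2 h))]
        ring
      · rw [if_neg e1, if_neg (fun h => e1 (h1.2 h))]
        by_cases e2 : (j:ℕ) = (i:ℕ) + k
        · rw [if_pos e2, if_pos (h2.1 e2)]; ring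
        · rw [if_neg e2, if_neg (fun h => e2 (h2.2 h))]; ring
    rw [Finset.sum_congr rfl (fun j _ => hpt j), Finset.sum_add_distrib]
    simp only [Finset.sum_ite_eq', Finset.mem_univ, if_pos]
    field_simp
  · have hpt : ∀ j : Fin (2*k), v12 k ε i j =
        (if (j:ℕ) < k then 1/(2*(k:ℝ)) + ε else 1/(2*(k:ℝ)) - ε) := by
      intro j; simp only [v12, if_neg hi]
    rw [Finset.sum_congr rfl (fun j _ => hpt j), sum_fin_two_mul_const]
    field_simp
    ring

/-- the optimal utilitarian welfare of the instance is at least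
`k²/(k+1) + 1/2 - kε`, while every iEF lottery has expected utilitarian welfare at most
`k/(k+1) + 1/2 + kε`; hence the price of iEF w.r.t. utilitarian welfare is Ω(n). -/
theorem price_of_iEF_utilitarian_lower (k : ℕ) (hk : 2 ≤ k)
    (ε : ℝ) (hε : 0 < ε) (hε' : ε < 1 / (2 * (k : ℝ))) :
    (∃ b : Equiv.Perm (Fin (2*k)),
      (k : ℝ)^2 / ((k : ℝ) + 1) + 1/2 - (k : ℝ) * ε ≤ ∑ i, v12 k ε i (b i)) ∧
    (∀ x : Equiv.Perm (Fin (2*k)) → ℝ,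
      (∀ b, 0 ≤ x b) → (∑ b, x b = 1) → MIEF (v12 k ε) x →
      (∑ b, x b * ∑ i, v12 k ε i (b i)) ≤ (k : ℝ) / ((k : ℝ) + 1) + 1/2 + (k : ℝ) * ε) := by
  have hk0 : (0:ℝ) < k := by exact_mod_cast (by omega : 0 < k)
  constructor
  · -- the identity matching
    refine ⟨Equiv.refl _, ?_⟩
    have hpt : ∀ i : Fin (2*k), v12 k ε i ((Equiv.refl _) i) =
        (if (i:ℕ) < k then (k:ℝ)/((k:ℝ)+1) else 1/(2*(k:ℝ)) - ε) := by
      intro i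
      by_cases hi : (i:ℕ) < k
      · simp [v12, hi]
      · simp only [Equiv.refl_apply, v12, if_neg hi, if_neg (by omega : ¬ ((i:ℕ) < k))]
        exact if_neg hi
    rw [Finset.sum_congr rfl (fun i _ => hpt i), sum_fin_two_mul_const]
    have h1 : (k:ℝ) * ((k:ℝ)/((k:ℝ)+1)) = (k:ℝ)^2/((k:ℝ)+1) := by
      field_simp
    have h2 : (k:ℝ) * (1/(2*(k:ℝ)) - ε) = 1/2 - (k:ℝ)*ε := by
      field_simp
    rw [h1, h2]
    linarith
  · intro x hx hsum hmief
    -- welfare bound for each supported matching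
    have key : ∀ b : Equiv.Perm (Fin (2*k)), 0 < x b →
        ∑ i, v12 k ε i (b i) ≤ (k:ℝ)/((k:ℝ)+1) + 1/2 + (k:ℝ)*ε := by
      intro b hb
      have hprop : ∀ i : Fin (2*k), (1:ℝ) ≤ 2*(k:ℝ) * v12 k ε i (b i) := by
        intro i
        have h := mief_prop (v12 k ε) x hx hmief b hb i
        rw [v12_row_sum k hk ε i] at h
        have hcast : ((2*k : ℕ) : ℝ) = 2*(k:ℝ) := by push_cast; ring
        rw [hcast] at h
        exact h
      -- agents ≥ k get items < k
      have hA : ∀ i : Fin (2*k), k ≤ (i:ℕ) → ((b i : Fin (2*k)) : ℕ) < k := by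
        intro i hi
        by_contra h
        push_neg at h
        have h1 := hprop i
        simp only [v12, if_neg (by omega : ¬ ((i:ℕ) < k)),
          if_neg (by omega : ¬ (((b i : Fin (2*k)) : ℕ) < k))] at h1
        have hone : 2*(k:ℝ)*(1/(2*(k:ℝ))) = 1 := by field_simp
        nlinarith [hone, mul_pos (by linarith : (0:ℝ) < 2*(k:ℝ)) hε]
      -- agents < k get item i + k
      have hB : ∀ i : Fin (2*k), (i:ℕ) < k → ((b i : Fin (2*k)) : ℕ) = (i:ℕ) + k := by
        intro i hi
        have hge : k ≤ ((b i : Fin (2*k)) : ℕ) := by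
          by_contra h
          push_neg at h
          have hsub : Finset.image b (insert i
                (Finset.univ.filter (fun m : Fin (2*k) => k ≤ (m:ℕ))))
              ⊆ Finset.univ.filter (fun j : Fin (2*k) => (j:ℕ) < k) := by
            intro j hj
            simp only [Finset.mem_image, Finset.mem_insert, Finset.mem_filter,
              Finset.mem_univ, true_and] at hj ⊢
            obtain ⟨m, hm, rfl⟩ := hj
            rcases hm with rfl | hm
            · exact h
            · exact hA m hm
          have hle := Finset.card_le_card hsub
          rw [Finset.card_image_of_injective _ b.injective,
            Finset.card_insert_of_notMem (by
              simp only [Finset.mem_filter, Finset.mem_univ, true_and, not_le]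
              exact hi)] at hle
          rw [card_filter_ge, card_filter_lt] at hle
          omega
        have h1 := hprop i
        by_contra h2
        have hne : ¬ (((b i : Fin (2*k)) : ℕ) = (i:ℕ)) := by omega
        simp only [v12, if_pos hi, if_neg hne, if_neg h2, mul_zero] at h1
        linarith
      -- welfare computation
      have hpt : ∀ i : Fin (2*k), v12 k ε i (b i) =
          (if (i:ℕ) < k then 1/((k:ℝ)+1) else 1/(2*(k:ℝ)) + ε) := by
        intro i
        by_cases hi : (i:ℕ) < k
        · have hbi := hB i hi
          simp only [v12, if_pos hi, if_neg (by omega : ¬ (((b i : Fin (2*k)) : ℕ) = (i:ℕ))),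
            if_pos hbi]
        · have hbi := hA i (not_lt.mp hi)
          simp only [v12, if_neg hi, if_pos hbi]
      rw [Finset.sum_congr rfl (fun i _ => hpt i), sum_fin_two_mul_const]
      have h1 : (k:ℝ) * (1/((k:ℝ)+1)) = (k:ℝ)/((k:ℝ)+1) := by field_simp
      have h2 : (k:ℝ) * (1/(2*(k:ℝ)) + ε) = 1/2 + (k:ℝ)*ε := by field_simp
      rw [h1, h2]
      linarith
    -- combine
    calc ∑ b, x b * ∑ i, v12 k ε i (b i)
        ≤ ∑ b, x b * ((k:ℝ)/((k:ℝ)+1) + 1/2 + (k:ℝ)*ε) := by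
          refine Finset.sum_le_sum (fun b _ => ?_)
          rcases (hx b).eq_or_lt with h | h
          · rw [← h]; simp
          · exact mul_le_mul_of_nonneg_left (key b h) (le_of_lt h)
      _ = (k:ℝ)/((k:ℝ)+1) + 1/2 + (k:ℝ)*ε := by
          rw [← Finset.sum_mul, hsum, one_mul]
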